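/- Let f : ℝ^M → ℝ be continuously differentiable, and suppose f satisfies the Lojasiewicz gradient inequality at a point w* with exponent α = 1/2: there exist C > 0 and a ball B around w* such that |f(w) - f(w*)|^(1/2) ≤ C‖∇f(w)‖ for all w in B. If w : ℝ≥0 → ℝ^M solves the gradient flow w'(t) = -∇f(w(t)), remains in B for all t ≥ 0, and f(w(t)) ≥ f(w*) for all t, then f(w(t)) - f(w*) ≤ (f(w(0)) - f(w*)) · exp(-t/C²) for all t ≥ 0. -/

import Mathlib

/-- Lojasiewicz inequality with exponent 1/2 gives exponential decay of the loss
along the gradient flow. -/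
theorem stmt1 {M : ℕ} (f : EuclideanSpace ℝ (Fin M) → ℝ)
    (wstar : EuclideanSpace ℝ (Fin M)) (C r : ℝ) (hC : 0 < C) (hr : 0 < r)
    (hf : ContDiff ℝ 1 f)
    (hLI : ∀ v ∈ Metric.ball wstar r,
      |f v - f wstar| ^ ((1 : ℝ) / 2) ≤ C * ‖gradient f v‖)
    (w : ℝ → EuclideanSpace ℝ (Fin M))
    (hflow : ∀ t, 0 ≤ t → HasDerivAt w (-(gradient f (w t))) t)
    (hball : ∀ t, 0 ≤ t → w t ∈ Metric.ball wstar r)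
    (hlb : ∀ t, 0 ≤ t → f wstar ≤ f (w t)) :
    ∀ t, 0 ≤ t →
      f (w t) - f wstar ≤ (f (w 0) - f wstar) * Real.exp (-t / C ^ 2) := by
  -- derivative of s ↦ f (w s)
  have hC2 : (0:ℝ) < C ^ 2 := by positivity
  have hgderiv : ∀ s, 0 ≤ s →
      HasDerivAt (fun u => f (w u) - f wstar) (-(‖gradient f (w s)‖ ^ 2)) s := by
    intro s hs
    have hd : HasGradientAt f (gradient f (w s)) (w s) :=
      (hf.differentiable one_ne_zero (w s)).hasGradientAt
    have h1 := hd.hasFDerivAt.comp_hasDerivAt s (hflow s hs)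
    have h2 : (InnerProductSpace.toDual ℝ (EuclideanSpace ℝ (Fin M))
        (gradient f (w s))) (-(gradient f (w s))) = -(‖gradient f (w s)‖ ^ 2) := by
      rw [InnerProductSpace.toDual_apply_apply, inner_neg_right, real_inner_self_eq_norm_sq]
    rw [h2] at h1
    exact h1.sub_const _
  -- key pointwise bound: g s ≤ C^2 * ‖∇f(w s)‖^2
  have hkey : ∀ s, 0 ≤ s →
      f (w s) - f wstar ≤ C ^ 2 * ‖gradient f (w s)‖ ^ 2 := by
    intro s hs
    have hli := hLI (w s) (hball s hs)
    have hgnn : 0 ≤ f (w s) - f wstar := sub_nonneg.2 (hlb s hs)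
    have hsq : (|f (w s) - f wstar| ^ ((1:ℝ)/2)) ^ 2 ≤ (C * ‖gradient f (w s)‖) ^ 2 := by
      apply pow_le_pow_left₀ (Real.rpow_nonneg (abs_nonneg _) _) hli
    calc f (w s) - f wstar = (|f (w s) - f wstar| ^ ((1:ℝ)/2)) ^ 2 := by
          rw [← Real.rpow_natCast (|f (w s) - f wstar| ^ ((1:ℝ)/2)) 2,
            ← Real.rpow_mul (abs_nonneg _)]
          norm_num [abs_of_nonneg hgnn]
      _ ≤ (C * ‖gradient f (w s)‖) ^ 2 := hsq
      _ = C ^ 2 * ‖gradient f (w s)‖ ^ 2 := by ring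
  -- the auxiliary function h s = g s * exp (s / C^2) is antitone on [0, ∞)
  set h : ℝ → ℝ := fun s => (f (w s) - f wstar) * Real.exp (s / C ^ 2) with hh
  have hhderiv : ∀ s, 0 ≤ s → HasDerivAt h
      ((-(‖gradient f (w s)‖ ^ 2)) * Real.exp (s / C ^ 2)
        + (f (w s) - f wstar) * (Real.exp (s / C ^ 2) * (1 / C ^ 2))) s := by
    intro s hs
    have he : HasDerivAt (fun u : ℝ => Real.exp (u / C ^ 2))
        (Real.exp (s / C ^ 2) * (1 / C ^ 2)) s := by
      simpa using ((hasDerivAt_id s).div_const (C ^ 2)).exp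
    exact (hgderiv s hs).mul he
  have hmono : AntitoneOn h (Set.Ici 0) := by
    apply antitoneOn_of_deriv_nonpos (convex_Ici 0)
    · intro s hs
      exact ((hhderiv s hs).continuousAt).continuousWithinAt
    · intro s hs
      rw [interior_Ici] at hs
      exact ((hhderiv s hs.le).differentiableAt).differentiableWithinAt
    · intro s hs
      rw [interior_Ici] at hs
      rw [(hhderiv s hs.le).deriv]
      have hb := hkey s hs.le
      have hexp : (0:ℝ) < Real.exp (s / C ^ 2) := Real.exp_pos _
      have : (f (w s) - f wstar) * (1 / C ^ 2) ≤ ‖gradient f (w s)‖ ^ 2 := by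
        rw [mul_one_div, div_le_iff₀ hC2]
        nlinarith
      nlinarith
  intro t ht
  have := hmono (Set.self_mem_Ici) ht ht
  simp only [hh] at this
  norm_num at this
  have hrw : Real.exp (-t / C ^ 2) = (Real.exp (t / C ^ 2))⁻¹ := by
    rw [← Real.exp_neg]; ring_nf
  rw [hrw, ← div_eq_mul_inv, le_div_iff₀ (Real.exp_pos _)]
  exact this
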